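/- Let G be a locally compact Hausdorff abelian topological group and η : G → ℂ a bounded function whose support Δ := {z ∈ G : η(z) ≠ 0} has uniformly discrete difference set Δ − Δ. For continuous compactly supported g : G → ℂ let (g ∗ μ)(x) := ∑_{z ∈ Δ} η(z)·g(x − z) (for each x a finite sum, since Δ is uniformly discrete). Assume μ is Bochner (strongly) almost periodic: for every continuous compactly supported g : G → ℂ and every δ > 0 there exist finitely many t₁, …, t_n ∈ G such that for every t ∈ G there is an index i with sup_{x ∈ G} |(g ∗ μ)(x) − (g ∗ μ)(x − (t − t_i))| < δ. Then μ is norm almost periodic: for every compact neighbourhood K of 0 in G and every ε > 0, the set {t ∈ G : N_K(t) < ε} is relatively dense in G, where N_K(t) := sup_{x ∈ G} ∑_{z ∈ (Δ ∪ (t + Δ)) ∩ (x + K)} |η(z − t) − η(z)| (each sum finite, N_K(t) finite). -/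

import Mathlib

open scoped Pointwise

/-- A subset `P` of a topological abelian group is relatively dense if `P + K = G`
for some compact `K`. -/
def RelativelyDense {G : Type*} [AddCommGroup G] [TopologicalSpace G] (P : Set G) : Prop :=
  ∃ K : Set G, IsCompact K ∧ P + K = Set.univ

/-- A subset `P` of a topological abelian group is uniformly discrete if there is an open
neighbourhood `V` of `0` such that `(t + V) ∩ P = {t}` for every `t ∈ P`. -/
def UniformlyDiscrete {G : Type*} [AddCommGroup G] [TopologicalSpace G] (P : Set G) : Prop :=
  ∃ V : Set G, IsOpen V ∧ (0 : G) ∈ V ∧ ∀ t ∈ P, ({t} + V) ∩ P = {t}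

/-- The `K`-norm `‖δ_t ∗ μ − μ‖_K` of the difference between the pure point measure
`μ = ∑_{z ∈ Δ} η(z) δ_z` and its translate by `t`:
`N_K(t) = sup_x ∑_{z ∈ (Δ ∪ (t+Δ)) ∩ (x+K)} |η(z−t) − η(z)|`. -/
noncomputable def muKNorm {G : Type*} [AddCommGroup G] [TopologicalSpace G]
    (η : G → ℂ) (K : Set G) (t : G) : ℝ :=
  ⨆ x : G, ∑' z : ↥(({z : G | η z ≠ 0} ∪ ({t} + {z : G | η z ≠ 0})) ∩ ({x} + K)),
    ‖η ((z : G) - t) - η (z : G)‖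

section SapHelpers

variable {G : Type*} [AddCommGroup G] [TopologicalSpace G] [IsTopologicalAddGroup G]

set_option linter.unusedSectionVars false in
/-- Counting lemma: a `V`-separated set meets any translate of a set covered by
finitely many `W`-translates in at most `F.card` points. -/
lemma sap_count_aux {V W : Set G} (hVW : ∀ a ∈ W, ∀ b ∈ W, a - b ∈ V)
    {S : Set G} (hsep : ∀ a ∈ S, ∀ b ∈ S, a - b ∈ V → a = b)
    {C : Set G} (F : Finset G) (hcov : C ⊆ ⋃ y ∈ F, ({y} + W)) (x : G) :
    (S ∩ ({x} + C)).Finite ∧ (S ∩ ({x} + C)).ncard ≤ F.card := by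
  have hex : ∀ z ∈ S ∩ ({x} + C), ∃ y, y ∈ F ∧ z - x - y ∈ W := by
    intro z hz
    obtain ⟨-, hzC⟩ := hz
    rw [Set.singleton_add, Set.mem_image] at hzC
    obtain ⟨c, hc, rfl⟩ := hzC
    have := hcov hc
    rw [Set.mem_iUnion₂] at this
    obtain ⟨y, hyF, hcy⟩ := this
    rw [Set.singleton_add, Set.mem_image] at hcy
    obtain ⟨w, hw, rfl⟩ := hcy
    refine ⟨y, hyF, ?_⟩
    have : x + (y + w) - x - y = w := by abel
    rw [this]; exact hw
  classical
  set T := S ∩ ({x} + C) with hT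
  let f : ↥T → {y // y ∈ F} := fun z => ⟨(hex ↑z z.2).choose, (hex ↑z z.2).choose_spec.1⟩
  have hinj : Function.Injective f := by
    intro z₁ z₂ hf
    have h1 := (hex ↑z₁ z₁.2).choose_spec.2
    have h2 := (hex ↑z₂ z₂.2).choose_spec.2
    have hy : (hex ↑z₁ z₁.2).choose = (hex ↑z₂ z₂.2).choose := congrArg Subtype.val hf
    rw [hy] at h1
    have hV : (z₁ : G) - (z₂ : G) ∈ V := by
      have := hVW _ h1 _ h2
      have heq : ((z₁:G) - x - (hex ↑z₂ z₂.2).choose) - ((z₂:G) - x - (hex ↑z₂ z₂.2).choose)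
          = (z₁:G) - (z₂:G) := by abel
      rwa [heq] at this
    exact Subtype.ext (hsep _ z₁.2.1 _ z₂.2.1 hV)
  haveI : Finite ↥T := Finite.of_injective f hinj
  refine ⟨Set.finite_coe_iff.mp ‹_›, ?_⟩
  rw [← Nat.card_coe_set_eq]
  calc Nat.card ↥T ≤ Nat.card {y // y ∈ F} := Nat.card_le_card_of_injective f hinj
    _ = F.card := by rw [Nat.card_eq_fintype_card, Fintype.card_coe]

/-- Algebra lemma: if `|a - bc| < δ` and `|ac - b| < δ` with `0 ≤ c ≤ 1` then `|b - a| ≤ 2δ`. -/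
lemma sap_alg_aux {a b : ℂ} {c δ : ℝ} (hc0 : 0 ≤ c) (hc1 : c ≤ 1)
    (h1 : ‖a - b * (c : ℂ)‖ < δ) (h2 : ‖a * (c : ℂ) - b‖ < δ) :
    ‖b - a‖ ≤ 2 * δ := by
  set A := ‖a‖ with hA
  set B := ‖b‖ with hB
  have hA0 : 0 ≤ A := norm_nonneg a
  have hB0 : 0 ≤ B := norm_nonneg b
  have habs1 : A ≤ δ + B * c := by
    have : a = (a - b * (c:ℂ)) + b * (c:ℂ) := by ring
    calc A = ‖(a - b * (c:ℂ)) + b * (c:ℂ)‖ := by rw [hA, ← this]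
      _ ≤ ‖a - b * (c:ℂ)‖ + ‖b * (c:ℂ)‖ := norm_add_le _ _
      _ ≤ δ + B * c := by
          rw [norm_mul, Complex.norm_real, Real.norm_eq_abs, abs_of_nonneg hc0]
          exact add_le_add h1.le le_rfl
  have habs2 : B ≤ δ + A * c := by
    have : b = -(a * (c:ℂ) - b) + a * (c:ℂ) := by ring
    calc B = ‖-(a * (c:ℂ) - b) + a * (c:ℂ)‖ := by rw [hB, ← this]
      _ ≤ ‖-(a * (c:ℂ) - b)‖ + ‖a * (c:ℂ)‖ := norm_add_le _ _
      _ ≤ δ + A * c := by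
          rw [norm_neg, norm_mul, Complex.norm_real, Real.norm_eq_abs, abs_of_nonneg hc0]
          exact add_le_add h2.le le_rfl
  have hBc : B * (1 - c) ≤ δ := by nlinarith
  have hsplit : b - a = (b - b * (c:ℂ)) + (b * (c:ℂ) - a) := by ring
  calc ‖b - a‖
      ≤ ‖b - b * (c:ℂ)‖ + ‖b * (c:ℂ) - a‖ := by
        rw [hsplit]; exact norm_add_le _ _
    _ ≤ δ + δ := by
        refine add_le_add ?_ ?_
        · have h : b - b * (c:ℂ) = b * ((1:ℂ) - (c:ℂ)) := by ring
          rw [h, norm_mul]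
          have h' : ‖(1:ℂ) - (c:ℂ)‖ = 1 - c := by
            rw [show ((1:ℂ) - (c:ℂ)) = ((1 - c : ℝ) : ℂ) by push_cast; ring,
              Complex.norm_real, Real.norm_eq_abs, abs_of_nonneg (by linarith)]
          rw [h']; exact hBc
        · rw [norm_sub_rev]
          exact h1.le
    _ = 2 * δ := by ring

/-- Existence of an even bump function supported in a neighbourhood `W` of `0`. -/
lemma sap_bump_aux [LocallyCompactSpace G] [T2Space G] {W : Set G}
    (hW : IsOpen W) (h0 : (0 : G) ∈ W) :
    ∃ g : G → ℝ, Continuous g ∧ HasCompactSupport g ∧ g 0 = 1 ∧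
      (∀ x, g x ∈ Set.Icc (0:ℝ) 1) ∧ (∀ x, g (-x) = g x) ∧ Function.support g ⊆ W := by
  obtain ⟨f, hf1, hf0, hfc, hf01⟩ := exists_continuous_one_zero_of_isCompact
    (isCompact_singleton : IsCompact ({0} : Set G)) hW.isClosed_compl
    (Set.disjoint_singleton_left.mpr (by simpa using h0))
  refine ⟨fun x => f x * f (-x), f.continuous.mul (f.continuous.comp continuous_neg),
    ?_, ?_, ?_, ?_, ?_⟩
  · have h : HasCompactSupport (f : G → ℝ) := hfc
    exact h.mul_right
  · have h := hf1 (Set.mem_singleton (0:G))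
    simp only [Pi.one_apply] at h
    simp [h]
  · intro x
    have h1 := hf01 x
    have h2 := hf01 (-x)
    exact ⟨mul_nonneg h1.1 h2.1, mul_le_one₀ h1.2 h2.1 h2.2⟩
  · intro x; simp [mul_comm]
  · intro x hx
    by_contra hxW
    have : f x = 0 := hf0 hxW
    simp [Function.mem_support, this] at hx

end SapHelpers

set_option maxHeartbeats 1000000 in
private lemma sap_main {G : Type*} [AddCommGroup G]
    [TopologicalSpace G] [IsTopologicalAddGroup G] [LocallyCompactSpace G] [T2Space G]
    (η : G → ℂ) (hbd : ∃ B : ℝ, ∀ z : G, ‖η z‖ ≤ B)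
    (hud : ∃ V : Set G, IsOpen V ∧ (0 : G) ∈ V ∧
      ∀ t ∈ ({z : G | η z ≠ 0} - {z : G | η z ≠ 0}),
        ({t} + V) ∩ ({z : G | η z ≠ 0} - {z : G | η z ≠ 0}) = {t})
    (hap : ∀ g : G → ℂ, Continuous g → HasCompactSupport g → ∀ δ : ℝ, 0 < δ →
      ∃ s : Finset G, ∀ t : G, ∃ ti ∈ s,
        (⨆ x : G, ‖(∑' z : {z : G | η z ≠ 0}, η z * g (x - (z : G))) -
           (∑' z : {z : G | η z ≠ 0}, η z * g (x - (t - ti) - (z : G)))‖) < δ)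
    (K : Set G) (hK : IsCompact K) (hKn : K ∈ nhds (0 : G)) (ε : ℝ) (hε : 0 < ε) :
    ∃ Q : Set G, IsCompact Q ∧
      {t : G | (⨆ x : G, ∑' z : ↥(({z : G | η z ≠ 0} ∪ ({t} + {z : G | η z ≠ 0})) ∩ ({x} + K)),
        ‖η ((z : G) - t) - η (z : G)‖) < ε} + Q = Set.univ := by
  classical
  obtain ⟨B₀, hB₀⟩ := hbd
  set B := max B₀ 0 with hBdef
  have hB : ∀ z, ‖η z‖ ≤ B := fun z => (hB₀ z).trans (le_max_left _ _)
  have hB0 : (0:ℝ) ≤ B := le_max_right _ _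
  by_cases hΔe : {z : G | η z ≠ 0} = ∅
  · have hη0 : ∀ z : G, η z = 0 := by
      intro z
      by_contra h
      exact (Set.eq_empty_iff_forall_notMem.mp hΔe z) h
    refine ⟨{0}, isCompact_singleton, Set.eq_univ_of_forall fun t => ?_⟩
    refine Set.mem_add.mpr ⟨t, ?_, 0, rfl, add_zero t⟩
    have hzero : ∀ x : G,
        (∑' z : ↥(({z : G | η z ≠ 0} ∪ ({t} + {z : G | η z ≠ 0})) ∩ ({x} + K)),
          ‖η ((z:G) - t) - η (z:G)‖) = 0 := by
      intro x
      have h : ∀ z : ↥(({z : G | η z ≠ 0} ∪ ({t} + {z : G | η z ≠ 0})) ∩ ({x} + K)),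
          ‖η ((z:G) - t) - η (z:G)‖ = 0 := by
        intro z; simp [hη0]
      rw [tsum_congr h, tsum_zero]
    show (⨆ x : G, _) < ε
    simp only [hzero]
    rw [ciSup_const]
    exact hε
  · obtain ⟨z₀, hz₀⟩ := Set.nonempty_iff_ne_empty.mpr hΔe
    obtain ⟨V, hVo, hV0, hVud⟩ := hud
    have hzero_mem : (0:G) ∈ ({z : G | η z ≠ 0} - {z : G | η z ≠ 0}) := by
      have := Set.sub_mem_sub hz₀ hz₀
      simpa using this
    have hsepD : ∀ d₁ ∈ ({z : G | η z ≠ 0} - {z : G | η z ≠ 0}),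
        ∀ d₂ ∈ ({z : G | η z ≠ 0} - {z : G | η z ≠ 0}), d₁ - d₂ ∈ V → d₁ = d₂ := by
      intro d₁ h₁ d₂ h₂ hV
      have hmem : d₁ ∈ ({d₂} + V) ∩ ({z : G | η z ≠ 0} - {z : G | η z ≠ 0}) := by
        refine ⟨Set.mem_add.mpr ⟨d₂, rfl, d₁ - d₂, hV, by abel⟩, h₁⟩
      rw [hVud d₂ h₂] at hmem
      exact hmem
    have hsepΔ : ∀ a ∈ {z : G | η z ≠ 0}, ∀ b ∈ {z : G | η z ≠ 0}, a - b ∈ V → a = b := by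
      intro a ha b hb hV
      have h := hsepD (a - b) (Set.sub_mem_sub ha hb) 0 hzero_mem (by simpa using hV)
      exact sub_eq_zero.mp h
    -- construction of the small symmetric precompact neighbourhood W
    obtain ⟨W₁, hW₁o, hW₁0, hW₁⟩ := exists_open_nhds_zero_half (hVo.mem_nhds hV0)
    obtain ⟨C₀, hC₀c, hC₀n⟩ := exists_compact_mem_nhds (0:G)
    set W₂ := W₁ ∩ interior C₀ with hW₂def
    have hW₂o : IsOpen W₂ := hW₁o.inter isOpen_interior
    have hW₂0 : (0:G) ∈ W₂ := ⟨hW₁0, mem_interior_iff_mem_nhds.mpr hC₀n⟩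
    set W := W₂ ∩ (-W₂) with hWdef
    have hWo : IsOpen W := hW₂o.inter hW₂o.neg
    have hW0 : (0:G) ∈ W := ⟨hW₂0, by simpa using hW₂0⟩
    have hWsym : ∀ a ∈ W, -a ∈ W := by
      rintro a ⟨h1, h2⟩
      exact ⟨Set.mem_neg.mp h2, by rwa [Set.mem_neg, neg_neg]⟩
    have hWV : ∀ a ∈ W, ∀ b ∈ W, a - b ∈ V := by
      intro a ha b hb
      have hb1 : -b ∈ W₁ := (Set.mem_neg.mp hb.2).1
      have h := hW₁ a ha.1.1 (-b) hb1
      simpa [sub_eq_add_neg] using h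
    have hWC₀ : W ⊆ C₀ := fun a ha => interior_subset ha.1.2
    have hWcc : IsCompact (closure W) :=
      hC₀c.of_isClosed_subset isClosed_closure (closure_minimal hWC₀ hC₀c.isClosed)
    -- coverings
    have hnhds : ∀ y : G, ({y} + W) ∈ nhds y := by
      intro y
      refine (hWo.add_left).mem_nhds ?_
      exact Set.mem_add.mpr ⟨y, rfl, 0, hW0, add_zero y⟩
    obtain ⟨F, -, hFcov⟩ := hK.elim_nhds_subcover (fun y => {y} + W) (fun y _ => hnhds y)
    obtain ⟨F₂, -, hF₂cov⟩ :=
      (hWcc.neg).elim_nhds_subcover (fun y => {y} + W) (fun y _ => hnhds y)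
    -- bump function
    obtain ⟨gR, hgc, hgs, hg0, hg01, hgeven, hgsupp⟩ := sap_bump_aux hWo hW0
    set gC : G → ℂ := fun x => (gR x : ℂ) with hgCdef
    have hgCc : Continuous gC := Complex.continuous_ofReal.comp hgc
    have hgCs : HasCompactSupport gC := hgs.comp_left (g := Complex.ofReal) Complex.ofReal_zero
    have hgC0 : ∀ x, x ∉ W → gC x = 0 := by
      intro x hx
      have h : gR x = 0 := by
        by_contra h
        exact hx (hgsupp h)
      simp [hgCdef, h]
    have hgC1 : gC 0 = 1 := by simp [hgCdef, hg0]
    set N := F.card with hNdef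
    set δ := ε / (4 * N + 1) with hδdef
    have hδpos : 0 < δ := by
      rw [hδdef]
      apply div_pos hε
      positivity
    obtain ⟨T, hT⟩ := hap gC hgCc hgCs δ hδpos
    clear_value δ N gC B
    -- evaluation lemmas
    have hEval : ∀ (y w : G), η w ≠ 0 → y - w ∈ W →
        (∑' z : {z : G | η z ≠ 0}, η (z:G) * gC (y - (z:G))) = η w * gC (y - w) := by
      intro y w hw hyw
      apply tsum_eq_single (⟨w, hw⟩ : {z : G | η z ≠ 0})
      intro z' hne
      by_cases hgz : gC (y - (z':G)) = 0
      · rw [hgz, mul_zero]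
      · exfalso
        have hzW : y - (z':G) ∈ W := by
          by_contra h
          exact hgz (hgC0 _ h)
        have heq : (z':G) = w := by
          apply hsepΔ _ z'.2 _ hw
          have h := hWV _ hyw _ hzW
          have h2 : (y - w) - (y - (z':G)) = (z':G) - w := by abel
          rwa [h2] at h
        exact hne (Subtype.ext heq)
    have hEval0 : ∀ y : G, (∀ w : G, η w ≠ 0 → y - w ∉ W) →
        (∑' z : {z : G | η z ≠ 0}, η (z:G) * gC (y - (z:G))) = 0 := by
      intro y h
      have hz : ∀ z : {z : G | η z ≠ 0}, η (z:G) * gC (y - (z:G)) = 0 := by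
        intro z
        rw [hgC0 _ (h (z:G) z.2), mul_zero]
      rw [tsum_congr hz, tsum_zero]
    -- uniform bound for the regularization
    have hAb : ∀ y : G,
        ‖∑' z : {z : G | η z ≠ 0}, η (z:G) * gC (y - (z:G))‖ ≤ (F₂.card : ℝ) * B := by
      intro y
      have hcnt := sap_count_aux hWV hsepΔ F₂ hF₂cov y
      set E := {z : G | η z ≠ 0} ∩ ({y} + -(closure W)) with hEdef
      have hEfin : E.Finite := hcnt.1
      have hpre : ((Subtype.val ⁻¹' E) : Set {z : G | η z ≠ 0}).Finite :=
        hEfin.preimage (Set.injOn_of_injective Subtype.val_injective)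
      have hvan : ∀ z : {z : G | η z ≠ 0},
          z ∉ hpre.toFinset → η (z:G) * gC (y - (z:G)) = 0 := by
        intro z hz
        by_cases hgz : gC (y - (z:G)) = 0
        · rw [hgz, mul_zero]
        · exfalso
          have hzW : y - (z:G) ∈ W := by
            by_contra h
            exact hgz (hgC0 _ h)
          apply hz
          rw [Set.Finite.mem_toFinset]
          show (z:G) ∈ E
          refine ⟨z.2, Set.mem_add.mpr ⟨y, rfl, -(y - (z:G)), ?_, by abel⟩⟩
          rw [Set.mem_neg, neg_neg]
          exact subset_closure hzW
      rw [tsum_eq_sum hvan]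
      have hterm : ∀ z : {z : G | η z ≠ 0},
          ‖η (z:G) * gC (y - (z:G))‖ ≤ B := by
        intro z
        rw [norm_mul]
        have hg : ‖gC (y - (z:G))‖ ≤ 1 := by
          rw [hgCdef]
          simp only [Complex.norm_real, Real.norm_eq_abs]
          rw [abs_of_nonneg (hg01 _).1]
          exact (hg01 _).2
        calc ‖η (z:G)‖ * ‖gC (y - (z:G))‖
            ≤ B * 1 := mul_le_mul (hB _) hg (norm_nonneg _) hB0
          _ = B := mul_one B
      calc ‖∑ z ∈ hpre.toFinset, η (z:G) * gC (y - (z:G))‖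
          ≤ ∑ z ∈ hpre.toFinset, ‖η (z:G) * gC (y - (z:G))‖ :=
            norm_sum_le _ _
        _ ≤ ∑ _z ∈ hpre.toFinset, B := Finset.sum_le_sum fun z _ => hterm z
        _ = (hpre.toFinset.card : ℝ) * B := by rw [Finset.sum_const, nsmul_eq_mul]
        _ ≤ (F₂.card : ℝ) * B := by
            apply mul_le_mul_of_nonneg_right _ hB0
            have h1 : hpre.toFinset.card ≤ F₂.card := by
              rw [show hpre.toFinset.card = (Subtype.val ⁻¹' E).ncard from
                (Set.ncard_eq_toFinset_card _ hpre).symm, ← Nat.card_coe_set_eq]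
              haveI : Finite ↥E := hEfin.to_subtype
              have hinj : Function.Injective
                  (fun z : ↥((Subtype.val ⁻¹' E) : Set {z : G | η z ≠ 0}) =>
                    (⟨Subtype.val (Subtype.val z), Set.mem_preimage.mp z.2⟩ : ↥E)) := by
                intro a b hab
                have h := congrArg Subtype.val hab
                exact Subtype.ext (Subtype.ext h)
              calc Nat.card ↥((Subtype.val ⁻¹' E) : Set {z : G | η z ≠ 0}) ≤ Nat.card ↥E :=
                    Nat.card_le_card_of_injective _ hinj
                _ = E.ncard := Nat.card_coe_set_eq E
                _ ≤ F₂.card := hcnt.2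
            exact_mod_cast h1
    -- the compact set witnessing relative density
    refine ⟨closure W + (T : Set G), hWcc.add T.finite_toSet.isCompact,
      Set.eq_univ_of_forall fun t => ?_⟩
    obtain ⟨ti, htiT, hsup⟩ := hT t
    set s := t - ti with hsdef
    clear_value s
    -- pointwise bound from the sup bound
    have hBdd : BddAbove (Set.range fun x : G => ‖(∑' z : {z : G | η z ≠ 0}, η (z:G) * gC (x - (z:G))) -
         (∑' z : {z : G | η z ≠ 0}, η (z:G) * gC (x - s - (z:G)))‖) := by
      have hx : ∀ x : G, ‖(∑' z : {z : G | η z ≠ 0}, η (z:G) * gC (x - (z:G))) -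
           (∑' z : {z : G | η z ≠ 0}, η (z:G) * gC (x - s - (z:G)))‖
          ≤ (F₂.card : ℝ) * B + (F₂.card : ℝ) * B := by
        intro x
        have h1 := hAb x
        have h2 := hAb (x - s)
        have h3 := norm_sub_le (∑' z : {z : G | η z ≠ 0}, η (z:G) * gC (x - (z:G)))
          (∑' z : {z : G | η z ≠ 0}, η (z:G) * gC (x - s - (z:G)))
        exact h3.trans (add_le_add h1 h2)
      exact ⟨(F₂.card : ℝ) * B + (F₂.card : ℝ) * B, by rintro r ⟨x, rfl⟩; exact hx x⟩
    have hpt : ∀ x : G, ‖(∑' z : {z : G | η z ≠ 0}, η (z:G) * gC (x - (z:G))) -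
         (∑' z : {z : G | η z ≠ 0}, η (z:G) * gC (x - s - (z:G)))‖ < δ :=
      fun x => lt_of_le_of_lt (le_ciSup hBdd x) hsup
    -- the common offset u₀
    obtain ⟨u₀, hu₀W, huniq⟩ : ∃ u₀ ∈ W, ∀ z w : G, η z ≠ 0 → η w ≠ 0 →
        z - s - w ∈ W → z - s - w = u₀ := by
      by_cases hD : ∃ d ∈ ({z : G | η z ≠ 0} - {z : G | η z ≠ 0}), d - s ∈ W
      · obtain ⟨d₀, hd₀m, hd₀W⟩ := hD
        refine ⟨d₀ - s, hd₀W, ?_⟩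
        intro z w hz hw hzw
        have hmem : z - w ∈ ({z : G | η z ≠ 0} - {z : G | η z ≠ 0}) :=
          Set.sub_mem_sub hz hw
        have heq : (z - w) - d₀ ∈ V := by
          have h := hWV _ hzw _ hd₀W
          have h2 : (z - s - w) - (d₀ - s) = (z - w) - d₀ := by abel
          rwa [h2] at h
        have h3 := hsepD _ hmem _ hd₀m heq
        rw [show z - s - w = (z - w) - s by abel, h3]
      · refine ⟨0, hW0, ?_⟩
        intro z w hz hw hzw
        exact absurd ⟨z - w, Set.sub_mem_sub hz hw,
          by rwa [show z - w - s = z - s - w by abel]⟩ hD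
    set s' := s + u₀ with hs'def
    clear_value s'
    -- key pointwise estimate
    have hkey : ∀ z : G, z ∈ ({z : G | η z ≠ 0} ∪ ({s'} + {z : G | η z ≠ 0})) →
        ‖η (z - s') - η z‖ ≤ 2 * δ := by
      intro z hz
      by_cases hzΔ : η z ≠ 0
      · have e1 : (∑' z' : {z : G | η z ≠ 0}, η (z':G) * gC (z - (z':G))) = η z := by
          rw [hEval z z hzΔ (by rw [sub_self]; exact hW0), sub_self, hgC1, mul_one]
        by_cases hw : ∃ w, η w ≠ 0 ∧ z - s - w ∈ W
        · obtain ⟨w, hwΔ, hwW⟩ := hw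
          have hu : z - s - w = u₀ := huniq z w hzΔ hwΔ hwW
          have hws' : z - s' = w := by rw [hs'def, ← hu]; abel
          have hc01 := hg01 u₀
          have e2 : (∑' z' : {z : G | η z ≠ 0}, η (z':G) * gC (z - s - (z':G)))
              = η w * ((gR u₀ : ℝ) : ℂ) := by
            rw [hEval (z - s) w hwΔ hwW, hu, hgCdef]
          have h1 : ‖η z - η w * ((gR u₀ : ℝ) : ℂ)‖ < δ := by
            have h := hpt z
            rwa [e1, e2] at h
          have e3 : (∑' z' : {z : G | η z ≠ 0}, η (z':G) * gC (z - u₀ - (z':G)))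
              = η z * ((gR u₀ : ℝ) : ℂ) := by
            rw [hEval (z - u₀) z hzΔ
              (by rw [show z - u₀ - z = -u₀ by abel]; exact hWsym _ hu₀W)]
            rw [show z - u₀ - z = -u₀ by abel, hgCdef]
            simp only []
            rw [hgeven]
          have e4 : (∑' z' : {z : G | η z ≠ 0}, η (z':G) * gC (z - u₀ - s - (z':G)))
              = η w := by
            have hyw : z - u₀ - s - w ∈ W := by
              rw [show z - u₀ - s - w = (z - s - w) - u₀ by abel, hu, sub_self]
              exact hW0
            rw [hEval (z - u₀ - s) w hwΔ hyw,
              show z - u₀ - s - w = (z - s - w) - u₀ by abel, hu, sub_self, hgC1, mul_one]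
          have h2 : ‖η z * ((gR u₀ : ℝ) : ℂ) - η w‖ < δ := by
            have h := hpt (z - u₀)
            rwa [e3, e4] at h
          rw [hws']
          exact sap_alg_aux hc01.1 hc01.2 h1 h2
        · push_neg at hw
          have e2 : (∑' z' : {z : G | η z ≠ 0}, η (z':G) * gC (z - s - (z':G))) = 0 :=
            hEval0 (z - s) hw
          have h1 : ‖η z‖ < δ := by
            have h := hpt z
            rwa [e1, e2, sub_zero] at h
          have hz' : η (z - s') = 0 := by
            by_contra h
            apply hw (z - s') h
            rw [hs'def, show z - s - (z - (s + u₀)) = u₀ by abel]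
            exact hu₀W
          rw [hz', zero_sub, norm_neg]
          linarith
      · have hz0 : η z = 0 := not_not.mp hzΔ
        have hzs : z ∈ ({s'} + {z : G | η z ≠ 0}) := by
          rcases hz with h | h
          · exact absurd h hzΔ
          · exact h
        obtain ⟨a, ha, w, hwΔ, haw⟩ := Set.mem_add.mp hzs
        rw [Set.mem_singleton_iff] at ha
        rw [ha] at haw
        have hws' : z - s' = w := by rw [← haw]; abel
        have e5 : (∑' z' : {z : G | η z ≠ 0}, η (z':G) * gC (z - u₀ - s - (z':G)))
            = η w := by
          have hzw0 : z - u₀ - s - w = 0 := by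
            rw [show z - u₀ - s - w = (z - s') - w by rw [hs'def]; abel, hws', sub_self]
          rw [hEval (z - u₀ - s) w hwΔ (by rw [hzw0]; exact hW0), hzw0, hgC1, mul_one]
        have e6 : (∑' z' : {z : G | η z ≠ 0}, η (z':G) * gC (z - u₀ - (z':G))) = 0 := by
          apply hEval0
          intro w' hw' hmem
          have hz2 : z - u₀ = s + w := by rw [← haw, hs'def]; abel
          have h1 : w' - s - w ∈ W := by
            have heq : w' - s - w = -(z - u₀ - w') := by rw [hz2]; abel
            rw [heq]
            exact hWsym _ hmem
          have h2 := huniq w' w hw' hwΔ h1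
          have h3 : w' = z := by
            have h4 : z = s + u₀ + w := by rw [← haw, hs'def]
            rw [h4, ← h2]
            abel
          rw [h3] at hw'
          exact hw' hz0
        have h : ‖0 - η w‖ < δ := by
          have h := hpt (z - u₀)
          rwa [e6, e5] at h
        rw [hws', hz0, sub_zero]
        rw [zero_sub, norm_neg] at h
        linarith
    -- the shifted support is also separated
    have hsep₂ : ∀ a ∈ ({s'} + {z : G | η z ≠ 0}), ∀ b ∈ ({s'} + {z : G | η z ≠ 0}),
        a - b ∈ V → a = b := by
      intro a ha b hb hV
      rw [Set.singleton_add, Set.mem_image] at ha hb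
      obtain ⟨p, hp, rfl⟩ := ha
      obtain ⟨q, hq, rfl⟩ := hb
      have h : p - q ∈ V := by
        have heq : s' + p - (s' + q) = p - q := by abel
        rwa [heq] at hV
      rw [hsepΔ p hp q hq h]
    -- bound on the K-norm of s'
    have hmuK : (⨆ x : G,
        ∑' z : ↥(({z : G | η z ≠ 0} ∪ ({s'} + {z : G | η z ≠ 0})) ∩ ({x} + K)),
          ‖η ((z:G) - s') - η (z:G)‖) < ε := by
      have hxb : ∀ x : G,
          (∑' z : ↥(({z : G | η z ≠ 0} ∪ ({s'} + {z : G | η z ≠ 0})) ∩ ({x} + K)),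
            ‖η ((z:G) - s') - η (z:G)‖) ≤ ((N:ℝ) + N) * (2 * δ) := by
        intro x
        have hc₁ := sap_count_aux hWV hsepΔ F hFcov x
        have hc₂ := sap_count_aux hWV hsep₂ F hFcov x
        have hunion : ({z : G | η z ≠ 0} ∪ ({s'} + {z : G | η z ≠ 0})) ∩ ({x} + K)
            = ({z : G | η z ≠ 0} ∩ ({x} + K)) ∪ (({s'} + {z : G | η z ≠ 0}) ∩ ({x} + K)) :=
          Set.union_inter_distrib_right _ _ _
        have hfin : (({z : G | η z ≠ 0} ∪ ({s'} + {z : G | η z ≠ 0})) ∩ ({x} + K)).Finite := by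
          rw [hunion]
          exact hc₁.1.union hc₂.1
        have hcard : (({z : G | η z ≠ 0} ∪ ({s'} + {z : G | η z ≠ 0})) ∩ ({x} + K)).ncard
            ≤ N + N := by
          rw [hunion, hNdef]
          exact le_trans (Set.ncard_union_le _ _) (add_le_add hc₁.2 hc₂.2)
        haveI : Finite ↥(({z : G | η z ≠ 0} ∪ ({s'} + {z : G | η z ≠ 0})) ∩ ({x} + K)) :=
          hfin.to_subtype
        have huniv : (Set.univ : Set
            ↥(({z : G | η z ≠ 0} ∪ ({s'} + {z : G | η z ≠ 0})) ∩ ({x} + K))).Finite :=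
          Set.finite_univ
        rw [tsum_eq_sum (s := huniv.toFinset)
          (fun b hb => absurd (huniv.mem_toFinset.mpr (Set.mem_univ b)) hb)]
        have hsum := Finset.sum_le_card_nsmul huniv.toFinset
          (fun z : ↥(({z : G | η z ≠ 0} ∪ ({s'} + {z : G | η z ≠ 0})) ∩ ({x} + K)) =>
            ‖η ((z:G) - s') - η (z:G)‖) (2 * δ)
          (fun z _ => hkey (z:G) z.2.1)
        refine le_trans hsum ?_
        rw [nsmul_eq_mul]
        apply mul_le_mul_of_nonneg_right _ (by linarith : (0:ℝ) ≤ 2 * δ)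
        have hcards : huniv.toFinset.card
            = (({z : G | η z ≠ 0} ∪ ({s'} + {z : G | η z ≠ 0})) ∩ ({x} + K)).ncard := by
          rw [show huniv.toFinset.card = (Set.univ : Set
              ↥(({z : G | η z ≠ 0} ∪ ({s'} + {z : G | η z ≠ 0})) ∩ ({x} + K))).ncard from
            (Set.ncard_eq_toFinset_card _ huniv).symm, Set.ncard_univ,
            Nat.card_coe_set_eq]
        rw [hcards]
        have hNN : ((N:ℝ) + N) = ((N + N : ℕ) : ℝ) := by push_cast; ring
        rw [hNN]
        exact_mod_cast hcard
      refine lt_of_le_of_lt (Real.iSup_le hxb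
        (mul_nonneg (by positivity) (by linarith : (0:ℝ) ≤ 2 * δ))) ?_
      have heq : ((N:ℝ) + N) * (2 * δ) = 4 * N * δ := by ring
      rw [heq, hδdef]
      rw [← mul_div_assoc]
      have h4 : (0:ℝ) < 4 * N + 1 := by positivity
      rw [div_lt_iff₀ h4]
      nlinarith [hε, Nat.cast_nonneg (α := ℝ) N]
    -- conclude
    refine Set.mem_add.mpr ⟨s', hmuK, -u₀ + ti, ?_, ?_⟩
    · exact Set.mem_add.mpr ⟨-u₀, subset_closure (hWsym _ hu₀W), ti,
        Finset.mem_coe.mpr htiT, rfl⟩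
    · rw [hs'def, hsdef]; abel


/-- A pure point measure `μ = ∑_{z ∈ Δ} η(z) δ_z` with bounded coefficients, whose support
`Δ` has uniformly discrete difference set `Δ − Δ`, is norm almost periodic as soon as it is
Bochner (strongly) almost periodic, i.e. as soon as all its regularizations
`g ∗ μ` are almost periodic functions in the Bochner (total boundedness) sense. -/
theorem strongly_almost_periodic_implies_norm_almost_periodic {G : Type*} [AddCommGroup G]
    [TopologicalSpace G] [IsTopologicalAddGroup G] [LocallyCompactSpace G] [T2Space G]
    (η : G → ℂ) (hbd : ∃ B : ℝ, ∀ z : G, ‖η z‖ ≤ B)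
    (hud : UniformlyDiscrete ({z : G | η z ≠ 0} - {z : G | η z ≠ 0}))
    (hap : ∀ g : G → ℂ, Continuous g → HasCompactSupport g → ∀ δ : ℝ, 0 < δ →
      ∃ s : Finset G, ∀ t : G, ∃ ti ∈ s,
        (⨆ x : G, ‖(∑' z : {z : G | η z ≠ 0}, η z * g (x - (z : G))) -
           (∑' z : {z : G | η z ≠ 0}, η z * g (x - (t - ti) - (z : G)))‖) < δ) :
    ∀ K : Set G, IsCompact K → K ∈ nhds (0 : G) → ∀ ε : ℝ, 0 < ε →
      RelativelyDense {t : G | muKNorm η K t < ε} := by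
  intro K hK hKn ε hε
  obtain ⟨V, hVo, hV0, hVud⟩ := hud
  obtain ⟨Q, hQ, hPQ⟩ := sap_main η hbd ⟨V, hVo, hV0, hVud⟩ hap K hK hKn ε hε
  exact ⟨Q, hQ, hPQ⟩
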